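/- Let L ⊆ ℝ^n be a linear subspace and P : ℝ^n → L the orthogonal projection onto L. Suppose z ∈ ℝ^n_+ \ {0} and i ∈ {1,...,n} are such that ‖(Pz)^+‖₁ ≤ (1/2)‖z‖_∞ and ‖z‖_∞ = z_i. Then every x ∈ L ∩ ℝ^n_+ satisfies x_i ≤ ‖x‖_∞ / 2. -/

import Mathlib

open scoped RealInnerProductSpace

noncomputable section

/-- The ℓ∞ norm of a vector in ℝⁿ. -/
def linf {n : ℕ} (x : EuclideanSpace ℝ (Fin n)) : ℝ := ⨆ j, |x j|

/-- The ℓ₁ norm of the componentwise positive part `v⁺` of a vector `v ∈ ℝⁿ`. -/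
def l1pos {n : ℕ} (v : EuclideanSpace ℝ (Fin n)) : ℝ := ∑ j, max (v j) 0

lemma abs_le_linf {n : ℕ} (x : EuclideanSpace ℝ (Fin n)) (j : Fin n) : |x j| ≤ linf x := by
  unfold linf
  exact le_ciSup (f := fun j => |x j|) (Set.Finite.bddAbove (Set.finite_range _)) j

/-- If `z ∈ ℝⁿ₊ \ {0}` satisfies `‖(Pz)⁺‖₁ ≤ (1/2)‖z‖_∞ = (1/2) z_i`, where `P` is the
orthogonal projection onto the subspace `L`, then every `x ∈ L ∩ ℝⁿ₊` has `x_i ≤ ‖x‖_∞ / 2`. -/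
theorem rescaling_cut {n : ℕ} (L : Submodule ℝ (EuclideanSpace ℝ (Fin n)))
    (z : EuclideanSpace ℝ (Fin n)) (hz0 : ∀ j, 0 ≤ z j) (hzne : z ≠ 0)
    (i : Fin n) (hzi : linf z = z i)
    (hPz : l1pos ((Submodule.orthogonalProjectionOnto L z : L) : EuclideanSpace ℝ (Fin n))
      ≤ (1 / 2) * linf z)
    (x : EuclideanSpace ℝ (Fin n)) (hxL : x ∈ L) (hx0 : ∀ j, 0 ≤ x j) :
    x i ≤ linf x / 2 := by
  set P : EuclideanSpace ℝ (Fin n) := ((Submodule.orthogonalProjectionOnto L z : L) : EuclideanSpace ℝ (Fin n))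
  -- linf z > 0
  have hzipos : 0 < z i := by
    rcases (hz0 i).lt_or_eq with h | h
    · exact h
    · exfalso; apply hzne
      ext j
      have h1 : |z j| ≤ linf z := abs_le_linf z j
      rw [hzi, ← h] at h1
      have := abs_nonneg (z j)
      have : z j ≤ 0 := le_trans (le_abs_self _) h1
      exact le_antisymm this (hz0 j)
  have hlinfx : ∀ j, x j ≤ linf x := fun j =>
    le_trans (le_abs_self _) (abs_le_linf x j)
  have hlinfx0 : 0 ≤ linf x := le_trans (hx0 i) (hlinfx i)
  -- inner products
  have hinner : ⟪z, x⟫ = ⟪P, x⟫ := by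
    have h : z - P ∈ Lᗮ := Submodule.sub_starProjection_mem_orthogonal (K := L) z
    have h0 : ⟪z - P, x⟫ = 0 := by rw [real_inner_comm]; exact h x hxL
    rw [inner_sub_left] at h0
    linarith
  have hzx : z i * x i ≤ ⟪z, x⟫ := by
    rw [PiLp.inner_apply]
    have : ∀ j ∈ Finset.univ, (0:ℝ) ≤ ⟪z j, x j⟫ := fun j _ =>
      mul_nonneg (hx0 j) (hz0 j)
    have h := Finset.single_le_sum this (Finset.mem_univ i)
    simp at h ⊢
    linarith
  have hPx : ⟪P, x⟫ ≤ l1pos P * linf x := by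
    rw [PiLp.inner_apply, l1pos, Finset.sum_mul]
    apply Finset.sum_le_sum
    intro j _
    have h1 : P j * x j ≤ max (P j) 0 * x j :=
      mul_le_mul_of_nonneg_right (le_max_left _ _) (hx0 j)
    have h2 : max (P j) 0 * x j ≤ max (P j) 0 * linf x :=
      mul_le_mul_of_nonneg_left (hlinfx j) (le_max_right _ _)
    exact le_trans (le_of_eq_of_le (by simp [mul_comm]) h1) h2
  have key : z i * x i ≤ (1/2) * (z i) * linf x := by
    calc z i * x i ≤ ⟪z, x⟫ := hzx
      _ = ⟪P, x⟫ := hinner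
      _ ≤ l1pos P * linf x := hPx
      _ ≤ (1/2) * linf z * linf x := by
          exact mul_le_mul_of_nonneg_right hPz hlinfx0
      _ = (1/2) * z i * linf x := by rw [hzi]
  nlinarith [key, hzipos]

end
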